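/- Under the frame setup on ℝ_s × ℝ_t × ℝ²_x with S, v of class C³, assume the caloric gauge conditions: A_s ≡ 0 and ψ_s = D₁ ψ₁ + D₂ ψ₂ pointwise. Then for every α ∈ {t, 1, 2} the field ψ_α satisfies the covariant heat equation pointwise: ∂_s ψ_α − ( ∂₁² + ∂₂² ) ψ_α = 2 i ( A₁ ∂₁ ψ_α + A₂ ∂₂ ψ_α ) − ( A₁² + A₂² − i ( ∂₁ A₁ + ∂₂ A₂ ) ) ψ_α + i ( Im( ψ_α conj(ψ₁) ) ψ₁ + Im( ψ_α conj(ψ₂) ) ψ₂ ). -/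

import Mathlib

open Matrix

/-- The heat-time direction in `ℝ_s × ℝ_t × ℝ²_x`. -/
def es : ℝ × ℝ × ℝ × ℝ := (1, 0, 0, 0)
/-- The Schrödinger-time direction in `ℝ_s × ℝ_t × ℝ²_x`. -/
def et : ℝ × ℝ × ℝ × ℝ := (0, 1, 0, 0)
/-- The first spatial direction in `ℝ_s × ℝ_t × ℝ²_x`. -/
def e1 : ℝ × ℝ × ℝ × ℝ := (0, 0, 1, 0)
/-- The second spatial direction in `ℝ_s × ℝ_t × ℝ²_x`. -/
def e2 : ℝ × ℝ × ℝ × ℝ := (0, 0, 0, 1)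

/-- Partial derivative of `f` in direction `e`. -/
noncomputable def pd4 {E : Type*} [NormedAddCommGroup E] [NormedSpace ℝ E]
    (f : ℝ × ℝ × ℝ × ℝ → E) (e : ℝ × ℝ × ℝ × ℝ) (p : ℝ × ℝ × ℝ × ℝ) : E :=
  fderiv ℝ f p e

/-- The complexified differentiated field `ψ_α = ⟨v, ∂_α S⟩ + i ⟨w, ∂_α S⟩`. -/
noncomputable def framePsi (S v w : ℝ × ℝ × ℝ × ℝ → Fin 3 → ℝ) (e p : ℝ × ℝ × ℝ × ℝ) : ℂ :=
  ((v p ⬝ᵥ pd4 S e p : ℝ) : ℂ) + Complex.I * ((w p ⬝ᵥ pd4 S e p : ℝ) : ℂ)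

/-- The real connection coefficient `A_α = ⟨w, ∂_α v⟩`. -/
noncomputable def frameA (v w : ℝ × ℝ × ℝ × ℝ → Fin 3 → ℝ) (e p : ℝ × ℝ × ℝ × ℝ) : ℝ :=
  w p ⬝ᵥ pd4 v e p

/-- The covariant derivative `D_α f = ∂_α f + i A_α f`. -/
noncomputable def Dcov (A : ℝ × ℝ × ℝ × ℝ → ℝ) (f : ℝ × ℝ × ℝ × ℝ → ℂ)
    (e p : ℝ × ℝ × ℝ × ℝ) : ℂ :=
  fderiv ℝ f p e + Complex.I * (A p : ℂ) * f p

abbrev P4 : Type := ℝ × ℝ × ℝ × ℝ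

lemma pd4_coord {f : P4 → Fin 3 → ℝ} {p : P4} (hf : DifferentiableAt ℝ f p) (e : P4) (i : Fin 3) :
    fderiv ℝ (fun q => f q i) p e = pd4 f e p i := by
  have := ((ContinuousLinearMap.proj (R := ℝ) (φ := fun _ : Fin 3 => ℝ) i).hasFDerivAt.comp p hf.hasFDerivAt).fderiv
  have h2 : (fun q => f q i) = (ContinuousLinearMap.proj (R := ℝ) (φ := fun _ : Fin 3 => ℝ) i) ∘ f := rfl
  rw [h2, this]; rfl

lemma pd4_dot {f g : P4 → Fin 3 → ℝ} {p : P4} (hf : DifferentiableAt ℝ f p) (hg : DifferentiableAt ℝ g p) (e : P4) :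
    pd4 (fun q => f q ⬝ᵥ g q) e p = pd4 f e p ⬝ᵥ g p + f p ⬝ᵥ pd4 g e p := by
  have hfi : ∀ i : Fin 3, DifferentiableAt ℝ (fun q => f q i) p := fun i => differentiableAt_pi.1 hf i
  have hgi : ∀ i : Fin 3, DifferentiableAt ℝ (fun q => g q i) p := fun i => differentiableAt_pi.1 hg i
  have h1 : (fun q => f q ⬝ᵥ g q) = (fun q => ∑ i : Fin 3, f q i * g q i) := by
    funext q; simp [dotProduct]
  unfold pd4
  rw [h1, fderiv_fun_sum (fun i _ => (hfi i).fun_mul (hgi i))]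
  simp only [ContinuousLinearMap.coe_sum', Finset.sum_apply]
  simp only [fun i => fderiv_fun_mul (hfi i) (hgi i), ContinuousLinearMap.add_apply,
    ContinuousLinearMap.smul_apply, smul_eq_mul, Finset.sum_add_distrib]
  have hc1 : ∀ i : Fin 3, fderiv ℝ (fun q => f q i) p e = fderiv ℝ f p e i := fun i => pd4_coord hf e i
  have hc2 : ∀ i : Fin 3, fderiv ℝ (fun q => g q i) p e = fderiv ℝ g p e i := fun i => pd4_coord hg e i
  simp only [hc1, hc2, dotProduct, pd4]
  rw [add_comm]
  congr 1 <;> exact Finset.sum_congr rfl (fun i _ => by ring)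

lemma contDiff_pd4 {E : Type*} [NormedAddCommGroup E] [NormedSpace ℝ E]
    {f : P4 → E} {n : ℕ} (hf : ContDiff ℝ (n + 1) f) (e : P4) :
    ContDiff ℝ n (fun p => pd4 f e p) := by
  have h1 : ContDiff ℝ n (fderiv ℝ f) := hf.fderiv_right (by norm_cast)
  exact (ContinuousLinearMap.apply ℝ E e).contDiff.comp h1

lemma pd4_comm {E : Type*} [NormedAddCommGroup E] [NormedSpace ℝ E]
    {f : P4 → E} (hf : ContDiff ℝ 2 f) (e e' p : P4) :
    pd4 (pd4 f e) e' p = pd4 (pd4 f e') e p := by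
  have hd : DifferentiableAt ℝ (fderiv ℝ f) p :=
    (hf.fderiv_right (m := 1) (by norm_num)).differentiable (by norm_num) p
  have hsymm : IsSymmSndFDerivAt ℝ f p := hf.contDiffAt.isSymmSndFDerivAt (by simp [minSmoothness_of_isRCLikeNormedField])
  have key : ∀ u : P4, fderiv ℝ (fun q => fderiv ℝ f q u) p = (fderiv ℝ (fderiv ℝ f) p).flip u := by
    intro u
    rw [fderiv_clm_apply hd (differentiableAt_const u)]
    simp
  show fderiv ℝ (fun q => fderiv ℝ f q e) p e' = fderiv ℝ (fun q => fderiv ℝ f q e') p e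
  rw [key e, key e']
  exact hsymm.eq e' e


lemma pd4_ofReal {a : P4 → ℝ} {p : P4} (ha : DifferentiableAt ℝ a p) (e : P4) :
    pd4 (fun q => ((a q : ℝ) : ℂ)) e p = ((pd4 a e p : ℝ) : ℂ) := by
  have h : (fun q => ((a q : ℝ) : ℂ)) = Complex.ofRealCLM ∘ a := rfl
  show fderiv ℝ (fun q => ((a q : ℝ) : ℂ)) p e = _
  rw [h, (Complex.ofRealCLM.hasFDerivAt.comp p ha.hasFDerivAt).fderiv]
  rfl

lemma diffAt_ofReal {a : P4 → ℝ} {p : P4} (ha : DifferentiableAt ℝ a p) :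
    DifferentiableAt ℝ (fun q => ((a q : ℝ) : ℂ)) p :=
  Complex.ofRealCLM.differentiableAt.comp p ha

lemma pd4_add {f g : P4 → ℂ} {p : P4} (hf : DifferentiableAt ℝ f p) (hg : DifferentiableAt ℝ g p) (e : P4) :
    pd4 (fun q => f q + g q) e p = pd4 f e p + pd4 g e p := by
  show fderiv ℝ (fun q => f q + g q) p e = _
  rw [fderiv_fun_add hf hg]; rfl

lemma pd4_const_mul {f : P4 → ℂ} {p : P4} (hf : DifferentiableAt ℝ f p) (c : ℂ) (e : P4) :
    pd4 (fun q => c * f q) e p = c * pd4 f e p := by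
  show fderiv ℝ (fun q => c * f q) p e = _
  rw [fderiv_const_mul hf c]; rfl

lemma pd4_mul_ofReal {A : P4 → ℝ} {f : P4 → ℂ} {p : P4}
    (hA : DifferentiableAt ℝ A p) (hf : DifferentiableAt ℝ f p) (e : P4) :
    pd4 (fun q => ((A q : ℝ) : ℂ) * f q) e p
      = ((pd4 A e p : ℝ) : ℂ) * f p + ((A p : ℝ) : ℂ) * pd4 f e p := by
  show fderiv ℝ (fun q => ((A q : ℝ) : ℂ) * f q) p e = _
  rw [fderiv_fun_mul (diffAt_ofReal hA) hf]
  have := pd4_ofReal hA e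
  simp only [ContinuousLinearMap.add_apply, ContinuousLinearMap.smul_apply, smul_eq_mul]
  rw [show (fderiv ℝ (fun q => ((A q : ℝ) : ℂ)) p) e = pd4 (fun q => ((A q : ℝ) : ℂ)) e p from rfl, this]
  rw [show (fderiv ℝ f p) e = pd4 f e p from rfl]
  ring

lemma contDiff_dot {f g : P4 → Fin 3 → ℝ} {n : ℕ∞} (hf : ContDiff ℝ n f) (hg : ContDiff ℝ n g) :
    ContDiff ℝ n (fun p => f p ⬝ᵥ g p) := by
  have h1 : (fun p => f p ⬝ᵥ g p) = fun p => ∑ i : Fin 3, f p i * g p i := by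
    funext q; simp [dotProduct]
  rw [h1]
  exact ContDiff.sum fun i _ => (contDiff_pi.1 hf i).mul (contDiff_pi.1 hg i)

lemma lagrange (a b : Fin 3 → ℝ) :
    crossProduct a b ⬝ᵥ crossProduct a b = (a ⬝ᵥ a) * (b ⬝ᵥ b) - (a ⬝ᵥ b) ^ 2 := by
  simp [cross_apply, dotProduct, Fin.sum_univ_three]; ring

lemma cross_dot_left (a b : Fin 3 → ℝ) : a ⬝ᵥ crossProduct a b = 0 := by
  simp [cross_apply, dotProduct, Fin.sum_univ_three]; ring

lemma cross_dot_right (a b : Fin 3 → ℝ) : b ⬝ᵥ crossProduct a b = 0 := by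
  simp [cross_apply, dotProduct, Fin.sum_univ_three]; ring

lemma parseval_aux (a b u u' : Fin 3 → ℝ) :
    (a ⬝ᵥ u) * (a ⬝ᵥ u') * (b ⬝ᵥ b) + (b ⬝ᵥ u) * (b ⬝ᵥ u') * (a ⬝ᵥ a)
      + (crossProduct a b ⬝ᵥ u) * (crossProduct a b ⬝ᵥ u')
      - (a ⬝ᵥ b) * ((a ⬝ᵥ u) * (b ⬝ᵥ u') + (b ⬝ᵥ u) * (a ⬝ᵥ u'))
    = (u ⬝ᵥ u') * ((a ⬝ᵥ a) * (b ⬝ᵥ b) - (a ⬝ᵥ b) ^ 2) := by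
  simp [cross_apply, dotProduct, Fin.sum_univ_three]; ring


section Frame

variable {S v w : P4 → Fin 3 → ℝ}
variable (hS : ContDiff ℝ 3 S) (hv : ContDiff ℝ 3 v)
variable (hS1 : ∀ p, S p ⬝ᵥ S p = 1) (hv1 : ∀ p, v p ⬝ᵥ v p = 1)
variable (hSv : ∀ p, S p ⬝ᵥ v p = 0)
variable (hw : ∀ p, w p = crossProduct (S p) (v p))

include hw hS hv in
lemma contDiff_w : ContDiff ℝ 3 w := by
  have : w = fun p => crossProduct (S p) (v p) := funext hw
  rw [this]
  apply contDiff_pi.2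
  intro i
  have hSi : ∀ j : Fin 3, ContDiff ℝ 3 fun p => S p j := fun j => contDiff_pi.1 hS j
  have hvi : ∀ j : Fin 3, ContDiff ℝ 3 fun p => v p j := fun j => contDiff_pi.1 hv j
  fin_cases i <;> simp only [cross_apply] <;> simp <;>
    exact ((hSi _).mul (hvi _)).sub ((hSi _).mul (hvi _))

include hw hS1 hv1 hSv in
lemma parseval (p : P4) (u u' : Fin 3 → ℝ) :
    u ⬝ᵥ u' = (S p ⬝ᵥ u) * (S p ⬝ᵥ u') + (v p ⬝ᵥ u) * (v p ⬝ᵥ u')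
      + (w p ⬝ᵥ u) * (w p ⬝ᵥ u') := by
  have h := parseval_aux (S p) (v p) u u'
  rw [hS1, hv1, hSv, ← hw] at h
  nlinarith [h]

section DiffFacts

include hS hv hw

lemma dS (p : P4) : DifferentiableAt ℝ S p := hS.differentiable (by norm_num) p
lemma dv (p : P4) : DifferentiableAt ℝ v p := hv.differentiable (by norm_num) p
lemma dw (p : P4) : DifferentiableAt ℝ w p :=
  (contDiff_w hS hv hw).differentiable (by norm_num) p

lemma cdS' (e : P4) : ContDiff ℝ 2 (fun p => pd4 S e p) :=
  contDiff_pd4 (n := 2) (by exact_mod_cast hS) e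
lemma cdv' (e : P4) : ContDiff ℝ 2 (fun p => pd4 v e p) :=
  contDiff_pd4 (n := 2) (by exact_mod_cast hv) e
lemma cdw' (e : P4) : ContDiff ℝ 2 (fun p => pd4 w e p) :=
  contDiff_pd4 (n := 2) (by exact_mod_cast (contDiff_w hS hv hw)) e

lemma dS' (e : P4) (p : P4) : DifferentiableAt ℝ (fun q => pd4 S e q) p :=
  (cdS' hS hv hw e).differentiable (by norm_num) p
lemma dv' (e : P4) (p : P4) : DifferentiableAt ℝ (fun q => pd4 v e q) p :=
  (cdv' hS hv hw e).differentiable (by norm_num) p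
lemma dw' (e : P4) (p : P4) : DifferentiableAt ℝ (fun q => pd4 w e q) p :=
  (cdw' hS hv hw e).differentiable (by norm_num) p

end DiffFacts

lemma pd4_dot_const {f g : P4 → Fin 3 → ℝ} {p : P4} {c : ℝ}
    (hf : DifferentiableAt ℝ f p) (hg : DifferentiableAt ℝ g p)
    (h : ∀ q, f q ⬝ᵥ g q = c) (e : P4) :
    pd4 f e p ⬝ᵥ g p + f p ⬝ᵥ pd4 g e p = 0 := by
  have h0 : pd4 (fun q => f q ⬝ᵥ g q) e p = 0 := by
    have hc : (fun q => f q ⬝ᵥ g q) = fun _ => c := funext h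
    rw [hc]; show fderiv ℝ _ p e = 0; simp
  rw [pd4_dot hf hg e] at h0; exact h0

include hS1 hv1 hSv hw in
lemma hww1 (p : P4) : w p ⬝ᵥ w p = 1 := by
  rw [hw, lagrange, hS1, hv1, hSv]; norm_num

include hw in
lemma hSw0 (p : P4) : S p ⬝ᵥ w p = 0 := by rw [hw, cross_dot_left]

include hw in
lemma hvw0 (p : P4) : v p ⬝ᵥ w p = 0 := by rw [hw, cross_dot_right]


include hS hv hw hS1 hv1 hSv in
lemma dotSS (e p : P4) : S p ⬝ᵥ pd4 S e p = 0 := by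
  have := pd4_dot_const (dS hS hv hw p) (dS hS hv hw p) hS1 e
  rw [dotProduct_comm] at this; linarith

include hS hv hw hS1 hv1 hSv in
lemma dotvv (e p : P4) : v p ⬝ᵥ pd4 v e p = 0 := by
  have := pd4_dot_const (dv hS hv hw p) (dv hS hv hw p) hv1 e
  rw [dotProduct_comm] at this; linarith

include hS hv hw hS1 hv1 hSv in
lemma dotww (e p : P4) : w p ⬝ᵥ pd4 w e p = 0 := by
  have := pd4_dot_const (dw hS hv hw p) (dw hS hv hw p) (hww1 hS1 hv1 hSv hw) e
  rw [dotProduct_comm] at this; linarith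

include hS hv hw hS1 hv1 hSv in
lemma dotSv (e p : P4) : S p ⬝ᵥ pd4 v e p = -(v p ⬝ᵥ pd4 S e p) := by
  have := pd4_dot_const (dS hS hv hw p) (dv hS hv hw p) hSv e
  rw [dotProduct_comm] at this; linarith

include hS hv hw hS1 hv1 hSv in
lemma dotSw (e p : P4) : S p ⬝ᵥ pd4 w e p = -(w p ⬝ᵥ pd4 S e p) := by
  have := pd4_dot_const (dS hS hv hw p) (dw hS hv hw p) (hSw0 hw) e
  rw [dotProduct_comm] at this; linarith

include hS hv hw hS1 hv1 hSv in
lemma dotvw (e p : P4) : v p ⬝ᵥ pd4 w e p = -(w p ⬝ᵥ pd4 v e p) := by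
  have := pd4_dot_const (dv hS hv hw p) (dw hS hv hw p) (hvw0 hw) e
  rw [dotProduct_comm] at this; linarith

lemma diff_dot {f g : P4 → Fin 3 → ℝ} {p : P4}
    (hf : DifferentiableAt ℝ f p) (hg : DifferentiableAt ℝ g p) :
    DifferentiableAt ℝ (fun q => f q ⬝ᵥ g q) p := by
  have h1 : (fun q => f q ⬝ᵥ g q) = fun q => ∑ i : Fin 3, f q i * g q i := by
    funext q; simp [dotProduct]
  rw [h1]
  exact DifferentiableAt.fun_sum fun i _ =>
    (differentiableAt_pi.1 hf i).mul (differentiableAt_pi.1 hg i)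

include hS hv hS1 hv1 hSv hw in
lemma dv_dS (e e' p : P4) :
    pd4 v e p ⬝ᵥ pd4 S e' p = (w p ⬝ᵥ pd4 v e p) * (w p ⬝ᵥ pd4 S e' p) := by
  have h := parseval hS1 hv1 hSv hw p (pd4 v e p) (pd4 S e' p)
  rw [dotSS hS hv hS1 hv1 hSv hw, dotvv hS hv hS1 hv1 hSv hw] at h
  linarith

include hS hv hS1 hv1 hSv hw in
lemma dw_dS (e e' p : P4) :
    pd4 w e p ⬝ᵥ pd4 S e' p = -((w p ⬝ᵥ pd4 v e p) * (v p ⬝ᵥ pd4 S e' p)) := by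
  have h := parseval hS1 hv1 hSv hw p (pd4 w e p) (pd4 S e' p)
  rw [dotSS hS hv hS1 hv1 hSv hw, dotww hS hv hS1 hv1 hSv hw,
    dotvw hS hv hS1 hv1 hSv hw] at h
  nlinarith [h]

include hS hv hS1 hv1 hSv hw in
lemma dw_dv (e e' p : P4) :
    pd4 w e p ⬝ᵥ pd4 v e' p = (w p ⬝ᵥ pd4 S e p) * (v p ⬝ᵥ pd4 S e' p) := by
  have h := parseval hS1 hv1 hSv hw p (pd4 w e p) (pd4 v e' p)
  rw [dotvv hS hv hS1 hv1 hSv hw, dotww hS hv hS1 hv1 hSv hw,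
    dotSw hS hv hS1 hv1 hSv hw, dotSv hS hv hS1 hv1 hSv hw] at h
  nlinarith [h]

include hS hv hS1 hv1 hSv hw in
lemma dpsi (e e' p : P4) :
    pd4 (framePsi S v w e) e' p
      = (((v p ⬝ᵥ pd4 (pd4 S e) e' p : ℝ) : ℂ)
          + Complex.I * ((w p ⬝ᵥ pd4 (pd4 S e) e' p : ℝ) : ℂ))
        - Complex.I * ((frameA v w e' p : ℝ) : ℂ) * framePsi S v w e p := by
  have hda : DifferentiableAt ℝ (fun q => v q ⬝ᵥ pd4 S e q) p :=
    diff_dot (dv hS hv hw p) (dS' hS hv hw e p)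
  have hdb : DifferentiableAt ℝ (fun q => w q ⬝ᵥ pd4 S e q) p :=
    diff_dot (dw hS hv hw p) (dS' hS hv hw e p)
  have hexp : framePsi S v w e = fun q =>
      ((v q ⬝ᵥ pd4 S e q : ℝ) : ℂ) + Complex.I * ((w q ⬝ᵥ pd4 S e q : ℝ) : ℂ) := rfl
  rw [hexp, pd4_add (diffAt_ofReal hda) ((diffAt_ofReal hdb).const_mul _),
    pd4_const_mul (diffAt_ofReal hdb), pd4_ofReal hda, pd4_ofReal hdb,
    pd4_dot (dv hS hv hw p) (dS' hS hv hw e p), pd4_dot (dw hS hv hw p) (dS' hS hv hw e p),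
    dv_dS hS hv hS1 hv1 hSv hw, dw_dS hS hv hS1 hv1 hSv hw]
  show _ = _ - Complex.I * ((w p ⬝ᵥ pd4 v e' p : ℝ) : ℂ)
      * (((v p ⬝ᵥ pd4 S e p : ℝ) : ℂ) + Complex.I * ((w p ⬝ᵥ pd4 S e p : ℝ) : ℂ))
  push_cast
  linear_combination (↑(w p ⬝ᵥ pd4 v e' p) * ↑(w p ⬝ᵥ pd4 S e p) : ℂ) * Complex.I_sq

include hS hv hS1 hv1 hSv hw in
lemma dAfun (e e' p : P4) :
    pd4 (frameA v w e) e' p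
      = (w p ⬝ᵥ pd4 S e' p) * (v p ⬝ᵥ pd4 S e p) + w p ⬝ᵥ pd4 (pd4 v e) e' p := by
  have hexp : frameA v w e = fun q => w q ⬝ᵥ pd4 v e q := rfl
  rw [hexp, pd4_dot (dw hS hv hw p) (dv' hS hv hw e p),
    dw_dv hS hv hS1 hv1 hSv hw]

include hS hv hS1 hv1 hSv hw in
lemma torsion (e e' p : P4) :
    pd4 (framePsi S v w e) e' p
        + Complex.I * ((frameA v w e' p : ℝ) : ℂ) * framePsi S v w e p
      = pd4 (framePsi S v w e') e p
        + Complex.I * ((frameA v w e p : ℝ) : ℂ) * framePsi S v w e' p := by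
  rw [dpsi hS hv hS1 hv1 hSv hw e e' p, dpsi hS hv hS1 hv1 hSv hw e' e p,
    pd4_comm (hS.of_le (by norm_num)) e e' p]
  ring

include hS hv hS1 hv1 hSv hw in
lemma curvature (e e' p : P4) :
    pd4 (frameA v w e) e' p - pd4 (frameA v w e') e p
      = (framePsi S v w e' p * (starRingEnd ℂ) (framePsi S v w e p)).im := by
  rw [dAfun hS hv hS1 hv1 hSv hw e e' p, dAfun hS hv hS1 hv1 hSv hw e' e p,
    pd4_comm (hv.of_le (by norm_num)) e e' p]
  simp only [framePsi, map_add, _root_.map_mul, Complex.conj_I, Complex.conj_ofReal]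
  simp [Complex.add_im, Complex.mul_im, Complex.add_re, Complex.mul_re]
  ring

include hS hv hw in
lemma contDiff_psi (e : P4) : ContDiff ℝ 2 (framePsi S v w e) := by
  have h1 : ContDiff ℝ 2 fun p => v p ⬝ᵥ pd4 S e p :=
    contDiff_dot (hv.of_le (by norm_num)) (cdS' hS hv hw e)
  have h2 : ContDiff ℝ 2 fun p => w p ⬝ᵥ pd4 S e p :=
    contDiff_dot ((contDiff_w hS hv hw).of_le (by norm_num)) (cdS' hS hv hw e)
  exact (Complex.ofRealCLM.contDiff.comp h1).add
    (contDiff_const.mul (Complex.ofRealCLM.contDiff.comp h2))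

include hS hv hw in
lemma contDiff_frameA (e : P4) : ContDiff ℝ 2 (frameA v w e) :=
  contDiff_dot ((contDiff_w hS hv hw).of_le (by norm_num)) (cdv' hS hv hw e)

lemma diff_pd4_c2 {E : Type*} [NormedAddCommGroup E] [NormedSpace ℝ E]
    {f : P4 → E} (hf : ContDiff ℝ 2 f) (e p : P4) :
    DifferentiableAt ℝ (pd4 f e) p :=
  ((contDiff_pd4 (n := 1) (by exact_mod_cast hf) e).differentiable (by norm_num) p)

lemma pd4_sub {f g : P4 → ℂ} {p : P4} (hf : DifferentiableAt ℝ f p)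
    (hg : DifferentiableAt ℝ g p) (e : P4) :
    pd4 (fun q => f q - g q) e p = pd4 f e p - pd4 g e p := by
  show fderiv ℝ (fun q => f q - g q) p e = _
  rw [fderiv_fun_sub hf hg]; rfl

lemma pd4_IAf {A : P4 → ℝ} {f : P4 → ℂ} {p : P4}
    (hA : DifferentiableAt ℝ A p) (hf : DifferentiableAt ℝ f p) (e : P4) :
    pd4 (fun q => Complex.I * ((A q : ℝ) : ℂ) * f q) e p
      = Complex.I * ((pd4 A e p : ℝ) : ℂ) * f p
        + Complex.I * ((A p : ℝ) : ℂ) * pd4 f e p := by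
  have h : (fun q => Complex.I * ((A q : ℝ) : ℂ) * f q)
      = fun q => Complex.I * (((A q : ℝ) : ℂ) * f q) := by
    funext q; ring
  rw [h, pd4_const_mul ((diffAt_ofReal hA).fun_mul hf), pd4_mul_ofReal hA hf]
  ring

lemma diff_IAf {A : P4 → ℝ} {f : P4 → ℂ} {p : P4}
    (hA : DifferentiableAt ℝ A p) (hf : DifferentiableAt ℝ f p) :
    DifferentiableAt ℝ (fun q => Complex.I * ((A q : ℝ) : ℂ) * f q) p :=
  ((differentiableAt_const _).mul (diffAt_ofReal hA)).mul hf

end Frame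


/-- In the caloric gauge (`A_s ≡ 0` and `ψ_s = D₁ψ₁ + D₂ψ₂`) each field `ψ_α`,
`α ∈ {t, 1, 2}`, satisfies the covariant heat equation
`∂_s ψ_α − Δψ_α = 2i(A₁∂₁ψ_α + A₂∂₂ψ_α) − (A₁² + A₂² − i(∂₁A₁ + ∂₂A₂))ψ_α
  + i(Im(ψ_α conj ψ₁)ψ₁ + Im(ψ_α conj ψ₂)ψ₂)`. -/
theorem covariant_heat_equation_caloric_gauge
    (S v : ℝ × ℝ × ℝ × ℝ → Fin 3 → ℝ)
    (hS : ContDiff ℝ 3 S) (hv : ContDiff ℝ 3 v)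
    (hS1 : ∀ p, S p ⬝ᵥ S p = 1) (hv1 : ∀ p, v p ⬝ᵥ v p = 1)
    (hSv : ∀ p, S p ⬝ᵥ v p = 0)
    (w : ℝ × ℝ × ℝ × ℝ → Fin 3 → ℝ) (hw : ∀ p, w p = crossProduct (S p) (v p))
    (hAs : ∀ p : ℝ × ℝ × ℝ × ℝ, frameA v w es p = 0)
    (hps : ∀ p : ℝ × ℝ × ℝ × ℝ,
      framePsi S v w es p =
        Dcov (frameA v w e1) (framePsi S v w e1) e1 p
          + Dcov (frameA v w e2) (framePsi S v w e2) e2 p) :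
    ∀ eα ∈ ({et, e1, e2} : Set (ℝ × ℝ × ℝ × ℝ)), ∀ p : ℝ × ℝ × ℝ × ℝ,
      pd4 (framePsi S v w eα) es p
          - (pd4 (pd4 (framePsi S v w eα) e1) e1 p
            + pd4 (pd4 (framePsi S v w eα) e2) e2 p) =
        2 * Complex.I * ((frameA v w e1 p : ℂ) * pd4 (framePsi S v w eα) e1 p
            + (frameA v w e2 p : ℂ) * pd4 (framePsi S v w eα) e2 p)
          - ((((frameA v w e1 p) ^ 2 + (frameA v w e2 p) ^ 2 : ℝ) : ℂ)
              - Complex.I * ((pd4 (frameA v w e1) e1 p + pd4 (frameA v w e2) e2 p : ℝ) : ℂ))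
            * framePsi S v w eα p
          + Complex.I *
            ((((framePsi S v w eα p * (starRingEnd ℂ) (framePsi S v w e1 p)).im : ℝ) : ℂ)
                * framePsi S v w e1 p
              + (((framePsi S v w eα p * (starRingEnd ℂ) (framePsi S v w e2 p)).im : ℝ) : ℂ)
                * framePsi S v w e2 p) := by
  intro eα _ p
  have hψC : ∀ e : P4, ContDiff ℝ 2 (framePsi S v w e) := contDiff_psi hS hv hw
  have hAC : ∀ e : P4, ContDiff ℝ 2 (frameA v w e) := contDiff_frameA hS hv hw
  have hψd : ∀ (e q : P4), DifferentiableAt ℝ (framePsi S v w e) q :=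
    fun e q => (hψC e).differentiable (by norm_num) q
  have hAd : ∀ (e q : P4), DifferentiableAt ℝ (frameA v w e) q :=
    fun e q => (hAC e).differentiable (by norm_num) q
  have hψd' : ∀ (e e' q : P4), DifferentiableAt ℝ (pd4 (framePsi S v w e) e') q :=
    fun e e' q => diff_pd4_c2 (hψC e) e' q
  have E1 : pd4 (framePsi S v w eα) es p
      = pd4 (framePsi S v w es) eα p
        + Complex.I * ((frameA v w eα p : ℝ) : ℂ) * framePsi S v w es p := by
    have h := torsion hS hv hS1 hv1 hSv hw eα es p
    rw [hAs p] at h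
    simpa using h
  have E2 : framePsi S v w es p
      = pd4 (framePsi S v w e1) e1 p
          + Complex.I * ((frameA v w e1 p : ℝ) : ℂ) * framePsi S v w e1 p
        + (pd4 (framePsi S v w e2) e2 p
          + Complex.I * ((frameA v w e2 p : ℝ) : ℂ) * framePsi S v w e2 p) :=
    hps p
  have hps2 : framePsi S v w es = fun q =>
      (pd4 (framePsi S v w e1) e1 q
        + Complex.I * ((frameA v w e1 q : ℝ) : ℂ) * framePsi S v w e1 q)
      + (pd4 (framePsi S v w e2) e2 q
        + Complex.I * ((frameA v w e2 q : ℝ) : ℂ) * framePsi S v w e2 q) :=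
    funext fun q => hps q
  have E3 : pd4 (framePsi S v w es) eα p
      = pd4 (pd4 (framePsi S v w e1) e1) eα p
        + (Complex.I * ((pd4 (frameA v w e1) eα p : ℝ) : ℂ) * framePsi S v w e1 p
          + Complex.I * ((frameA v w e1 p : ℝ) : ℂ) * pd4 (framePsi S v w e1) eα p)
      + (pd4 (pd4 (framePsi S v w e2) e2) eα p
        + (Complex.I * ((pd4 (frameA v w e2) eα p : ℝ) : ℂ) * framePsi S v w e2 p
          + Complex.I * ((frameA v w e2 p : ℝ) : ℂ) * pd4 (framePsi S v w e2) eα p)) := by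
    rw [hps2,
      pd4_add ((hψd' e1 e1 p).fun_add (diff_IAf (hAd e1 p) (hψd e1 p)))
        ((hψd' e2 e2 p).fun_add (diff_IAf (hAd e2 p) (hψd e2 p))),
      pd4_add (hψd' e1 e1 p) (diff_IAf (hAd e1 p) (hψd e1 p)),
      pd4_add (hψd' e2 e2 p) (diff_IAf (hAd e2 p) (hψd e2 p)),
      pd4_IAf (hAd e1 p) (hψd e1 p), pd4_IAf (hAd e2 p) (hψd e2 p)]
  have E45 : ∀ ek : P4,
      pd4 (pd4 (framePsi S v w ek) ek) eα p
        = pd4 (pd4 (framePsi S v w eα) ek) ek p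
          + (Complex.I * ((pd4 (frameA v w ek) ek p : ℝ) : ℂ) * framePsi S v w eα p
            + Complex.I * ((frameA v w ek p : ℝ) : ℂ) * pd4 (framePsi S v w eα) ek p)
          - (Complex.I * ((pd4 (frameA v w eα) ek p : ℝ) : ℂ) * framePsi S v w ek p
            + Complex.I * ((frameA v w eα p : ℝ) : ℂ) * pd4 (framePsi S v w ek) ek p) := by
    intro ek
    rw [pd4_comm (hψC ek) ek eα p]
    have h5 : pd4 (framePsi S v w ek) eα = fun q =>
        pd4 (framePsi S v w eα) ek q
          + Complex.I * ((frameA v w ek q : ℝ) : ℂ) * framePsi S v w eα q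
          - Complex.I * ((frameA v w eα q : ℝ) : ℂ) * framePsi S v w ek q := by
      funext q
      have h := torsion hS hv hS1 hv1 hSv hw ek eα q
      linear_combination h
    rw [h5,
      pd4_sub ((hψd' eα ek p).fun_add (diff_IAf (hAd ek p) (hψd eα p)))
        (diff_IAf (hAd eα p) (hψd ek p)),
      pd4_add (hψd' eα ek p) (diff_IAf (hAd ek p) (hψd eα p)),
      pd4_IAf (hAd ek p) (hψd eα p), pd4_IAf (hAd eα p) (hψd ek p)]
  have E6 : ∀ ek : P4,
      pd4 (framePsi S v w ek) eα p
          + Complex.I * ((frameA v w eα p : ℝ) : ℂ) * framePsi S v w ek p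
        = pd4 (framePsi S v w eα) ek p
          + Complex.I * ((frameA v w ek p : ℝ) : ℂ) * framePsi S v w eα p :=
    fun ek => torsion hS hv hS1 hv1 hSv hw ek eα p
  have E7 : ∀ ek : P4,
      ((pd4 (frameA v w ek) eα p : ℝ) : ℂ) - ((pd4 (frameA v w eα) ek p : ℝ) : ℂ)
        = (((framePsi S v w eα p * (starRingEnd ℂ) (framePsi S v w ek p)).im : ℝ) : ℂ) := by
    intro ek
    exact_mod_cast congrArg (fun x : ℝ => (x : ℂ)) (curvature hS hv hS1 hv1 hSv hw ek eα p)
  push_cast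
  linear_combination E1 + E3 + E45 e1 + E45 e2
    + Complex.I * ((frameA v w eα p : ℝ) : ℂ) * E2
    + Complex.I * ((frameA v w e1 p : ℝ) : ℂ) * E6 e1
    + Complex.I * ((frameA v w e2 p : ℝ) : ℂ) * E6 e2
    + Complex.I * framePsi S v w e1 p * E7 e1
    + Complex.I * framePsi S v w e2 p * E7 e2
    + (((frameA v w e1 p : ℝ) : ℂ) ^ 2 + ((frameA v w e2 p : ℝ) : ℂ) ^ 2)
      * framePsi S v w eα p * Complex.I_sq
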